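/- arXiv:2508.20036 — 4 statements merged into one kernel-verified Lean document; each statement's English description precedes it below -/
import Mathlib

section
/- If A and B are symmetric n×n real matrices and z is a complex number with positive imaginary part, then |(1/n)Tr((A - zI)^{-1}) - (1/n)Tr((B - zI)^{-1})| ≤ (π / (n · Im z)) · rank(A - B). -/
open Matrix Complex

noncomputable section StieltjesAux

variable {n : ℕ}

def iotaC (n : ℕ) : (Fin n → ℝ) →ₗ[ℝ] (Fin n → ℂ) where
  toFun v := fun i => (v i : ℂ)
  map_add' := by intros; ext i; simp
  map_smul' := by intros; ext i; simp [Complex.real_smul]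

lemma rank_map_ofReal_le (M : Matrix (Fin n) (Fin n) ℝ) :
    (M.map (Complex.ofReal)).rank ≤ M.rank := by
  classical
  set W := LinearMap.range M.mulVecLin with hW
  have hfr : M.rank = Module.finrank ℝ W := rfl
  let b := Module.finBasis ℝ W
  have hcard : Fintype.card (Fin (Module.finrank ℝ W)) = Module.finrank ℝ W := by simp
  -- the span of the images of the basis vectors
  set S := Submodule.span ℂ (Set.range fun i => iotaC n (b i)) with hS
  have hmem : ∀ w : W, iotaC n (w : Fin n → ℝ) ∈ S := by
    intro w
    have := Module.Basis.sum_repr b w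
    rw [← this]
    have : (iotaC n) ((∑ i, b.repr w i • b i : W) : Fin n → ℝ)
        = ∑ i, ((b.repr w i : ℝ) : ℂ) • iotaC n (b i) := by
      rw [Submodule.coe_sum, map_sum (iotaC n)]
      refine Finset.sum_congr rfl fun i _ => ?_
      ext t
      simp [iotaC, Complex.real_smul]
    rw [this]
    exact Submodule.sum_mem _ fun i _ => Submodule.smul_mem _ _
      (Submodule.subset_span ⟨i, rfl⟩)
  have hrange : LinearMap.range (M.map (Complex.ofReal)).mulVecLin ≤ S := by
    rintro _ ⟨x, rfl⟩
    have hdecomp : (M.map (Complex.ofReal)).mulVecLin x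
        = iotaC n (M.mulVec fun i => (x i).re)
          + Complex.I • iotaC n (M.mulVec fun i => (x i).im) := by
      ext j
      simp only [mulVecLin_apply, mulVec, dotProduct, map_apply, iotaC,
        LinearMap.coe_mk, AddHom.coe_mk, Pi.add_apply, Pi.smul_apply,
        smul_eq_mul, Finset.mul_sum]
      push_cast
      rw [Finset.mul_sum, ← Finset.sum_add_distrib]
      refine Finset.sum_congr rfl fun k _ => ?_
      conv_lhs => rw [← Complex.re_add_im (x k)]
      ring
    rw [hdecomp]
    exact Submodule.add_mem _ (hmem ⟨_, LinearMap.mem_range_self _ _⟩)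
      (Submodule.smul_mem _ _ (hmem ⟨_, LinearMap.mem_range_self _ _⟩))
  calc (M.map (Complex.ofReal)).rank
      ≤ Module.finrank ℂ S := Submodule.finrank_mono hrange
    _ ≤ Fintype.card (Fin (Module.finrank ℝ W)) := finrank_range_le_card _
    _ = M.rank := by rw [hcard, hfr]


lemma isHermitian_map_ofReal {C : Matrix (Fin n) (Fin n) ℝ} (hC : C.IsSymm) :
    (C.map Complex.ofReal).IsHermitian := by
  ext i j
  have h := congrFun (congrFun hC i) j
  simp only [Matrix.transpose_apply] at h
  simp [Matrix.conjTranspose_apply, Matrix.map_apply, h]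

lemma toEuclideanLin_one' : Matrix.toEuclideanLin (1 : Matrix (Fin n) (Fin n) ℂ) = LinearMap.id := by
  ext v j
  simp [Matrix.toEuclideanLin_apply]

lemma key_lower {C : Matrix (Fin n) (Fin n) ℝ} (hC : C.IsSymm) {z : ℂ}
    (w : EuclideanSpace ℂ (Fin n)) :
    z.im * ‖w‖ ^ 2 ≤ ‖w‖ * ‖Matrix.toEuclideanLin (C.map Complex.ofReal - z • 1) w‖ := by
  classical
  set f := Matrix.toEuclideanLin (C.map Complex.ofReal - z • 1) with hf
  set x := @inner ℂ _ _ w (f w) with hx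
  have hsym : (Matrix.toEuclideanLin (C.map Complex.ofReal)).IsSymmetric :=
    Matrix.isHermitian_iff_isSymmetric.mp (isHermitian_map_ofReal hC)
  have him0 : (@inner ℂ _ _ w (Matrix.toEuclideanLin (C.map Complex.ofReal) w)).im = 0 := by
    refine Complex.conj_eq_iff_im.mp ?_
    rw [inner_conj_symm]
    exact hsym w w
  have hfw : f w = Matrix.toEuclideanLin (C.map Complex.ofReal) w - z • w := by
    rw [hf, map_sub, _root_.map_smul, toEuclideanLin_one']
    rfl
  have hww : (@inner ℂ _ _ w w) = ((‖w‖ : ℂ) ^ 2) := by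
    rw [inner_self_eq_norm_sq_to_K]; norm_num
  have hxim : x.im = - (z.im * ‖w‖ ^ 2) := by
    rw [hx, hfw, inner_sub_right, inner_smul_right, hww, Complex.sub_im, him0]
    simp [Complex.mul_im, ← Complex.ofReal_pow]
  have h1 : z.im * ‖w‖ ^ 2 ≤ |x.im| := by
    rw [hxim, abs_neg]; exact le_abs_self _
  have h2 : |x.im| ≤ ‖x‖ := Complex.abs_im_le_norm x
  have h3 : ‖x‖ ≤ ‖w‖ * ‖f w‖ := by
    rw [hx]
    exact norm_inner_le_norm w (f w)
  linarith

lemma isUnit_det_shift {C : Matrix (Fin n) (Fin n) ℝ} (hC : C.IsSymm) {z : ℂ} (hz : 0 < z.im) :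
    IsUnit (C.map Complex.ofReal - z • 1).det := by
  classical
  rw [isUnit_iff_ne_zero]
  intro hdet
  obtain ⟨v, hv0, hv⟩ := (Matrix.exists_mulVec_eq_zero_iff).mpr hdet
  set w : EuclideanSpace ℂ (Fin n) := (WithLp.equiv 2 (Fin n → ℂ)).symm v with hw
  have hfw : Matrix.toEuclideanLin (C.map Complex.ofReal - z • 1) w = 0 := by
    rw [Matrix.toEuclideanLin_apply]
    simp [hw, hv]
  have := key_lower hC (z := z) w
  rw [hfw] at this
  simp at this
  have hwn : ‖w‖ ≠ 0 := by
    simp [hw, norm_eq_zero]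
    exact hv0
  have hwpos : 0 < ‖w‖ := lt_of_le_of_ne (norm_nonneg w) (Ne.symm hwn)
  nlinarith [mul_pos hz (mul_pos hwpos hwpos), _root_.sq_abs ‖w‖]

lemma resolvent_bound {C : Matrix (Fin n) (Fin n) ℝ} (hC : C.IsSymm) {z : ℂ} (hz : 0 < z.im)
    (v : EuclideanSpace ℂ (Fin n)) :
    ‖Matrix.toEuclideanLin (C.map Complex.ofReal - z • 1)⁻¹ v‖ ≤ ‖v‖ / z.im := by
  classical
  set T := C.map Complex.ofReal - z • 1 with hT
  set w := Matrix.toEuclideanLin T⁻¹ v with hwdef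
  have hTw : Matrix.toEuclideanLin T w = v := by
    rw [hwdef, Matrix.toEuclideanLin_apply, Matrix.toEuclideanLin_apply]
    simp only [Equiv.apply_symm_apply, Matrix.mulVec_mulVec]
    rw [Matrix.mul_nonsing_inv _ (isUnit_det_shift hC hz)]
    simp
  have hk := key_lower hC (z := z) w
  rw [hTw] at hk
  rcases eq_or_lt_of_le (norm_nonneg w) with h0 | h0
  · rw [← h0]; positivity
  · rw [div_eq_inv_mul, ← mul_le_mul_iff_right₀ h0]
    calc ‖w‖ * ‖w‖ = ‖w‖ ^ 2 := by ring
      _ ≤ (‖w‖ * ‖v‖) / z.im := by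
          rw [le_div_iff₀ hz]; nlinarith
      _ = ‖w‖ * (z.im⁻¹ * ‖v‖) := by field_simp

lemma trace_bound (M : Matrix (Fin n) (Fin n) ℂ) {c : ℝ} (hc : 0 ≤ c)
    (h : ∀ v : EuclideanSpace ℂ (Fin n), ‖(@inner ℂ _ _ v (Matrix.toEuclideanLin M v))‖ ≤ c * ‖v‖ ^ 2) :
    ‖M.trace‖ ≤ (M.rank : ℝ) * c := by
  classical
  set f := Matrix.toEuclideanLin M with hfdef
  set p := LinearMap.range f with hp
  have hmem : ∀ x, f x ∈ p := fun x => LinearMap.mem_range_self f x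
  have hmem' : ∀ x ∈ p, f x ∈ p := fun x _ => hmem x
  -- (a) matrix trace = linear map trace
  have ha : M.trace = LinearMap.trace ℂ (EuclideanSpace ℂ (Fin n)) f := by
    rw [hfdef, Matrix.toEuclideanLin_eq_toLin,
      LinearMap.trace_eq_matrix_trace ℂ (PiLp.basisFun 2 ℂ (Fin n)),
      LinearMap.toMatrix_toLin]
  -- (b) the rank equals the dimension of p
  have hb : M.rank = Module.finrank ℂ p := by
    rw [hp, hfdef, Matrix.toEuclideanLin_eq_toLin]
    exact Matrix.rank_eq_finrank_range_toLin M _ _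
  -- (c) restrict to the range
  have hc' : LinearMap.trace ℂ p (f.restrict hmem') = LinearMap.trace ℂ (EuclideanSpace ℂ (Fin n)) f :=
    LinearMap.trace_restrict_eq_of_forall_mem p f hmem hmem'
  -- (d) orthonormal basis of p
  set g := f.restrict hmem' with hg
  let ob := stdOrthonormalBasis ℂ p
  have hd : LinearMap.trace ℂ p g = ∑ i, (@inner ℂ _ _ ((ob i : EuclideanSpace ℂ (Fin n))) (f (ob i : EuclideanSpace ℂ (Fin n)))) := by
    rw [LinearMap.trace_eq_matrix_trace ℂ ob.toBasis, Matrix.trace]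
    refine Finset.sum_congr rfl fun i _ => ?_
    rw [Matrix.diag_apply, LinearMap.toMatrix_apply, ob.coe_toBasis_repr_apply,
      ob.repr_apply_apply, ob.coe_toBasis]
    rw [Submodule.coe_inner]
    congr 1
  have hterm : ∀ i, ‖(@inner ℂ _ _ ((ob i : EuclideanSpace ℂ (Fin n))) (f (ob i : EuclideanSpace ℂ (Fin n))))‖ ≤ c := by
    intro i
    have hn1 : ‖(ob i : EuclideanSpace ℂ (Fin n))‖ = 1 := by
      rw [Submodule.norm_coe]
      exact ob.orthonormal.1 i
    calc ‖(@inner ℂ _ _ ((ob i : EuclideanSpace ℂ (Fin n))) (f (ob i : EuclideanSpace ℂ (Fin n))))‖ ≤ c * ‖(ob i : EuclideanSpace ℂ (Fin n))‖ ^ 2 := h _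
      _ = c := by rw [hn1]; ring
  have habs : ‖M.trace‖ = ‖∑ i, (@inner ℂ _ _ ((ob i : EuclideanSpace ℂ (Fin n))) (f (ob i : EuclideanSpace ℂ (Fin n))))‖ := by
    rw [ha, ← hc', hd]
  rw [habs]
  calc ‖∑ i, (@inner ℂ _ _ ((ob i : EuclideanSpace ℂ (Fin n))) (f (ob i : EuclideanSpace ℂ (Fin n))))‖
      ≤ ∑ i, ‖(@inner ℂ _ _ ((ob i : EuclideanSpace ℂ (Fin n))) (f (ob i : EuclideanSpace ℂ (Fin n))))‖ := norm_sum_le _ _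
    _ ≤ ∑ _i : Fin (Module.finrank ℂ p), c := Finset.sum_le_sum fun i _ => hterm i
    _ = (Module.finrank ℂ p : ℝ) * c := by simp [mul_comm]
    _ = (M.rank : ℝ) * c := by rw [hb]

lemma rank_neg' (M : Matrix (Fin n) (Fin n) ℝ) : (-M).rank = M.rank := by
  have hml : (-M).mulVecLin = -(M.mulVecLin) := by
    ext v j; simp [Matrix.mulVecLin_apply, Matrix.neg_mulVec]
  have h : LinearMap.range (-M).mulVecLin = LinearMap.range M.mulVecLin := by
    rw [hml, LinearMap.range_neg]
  unfold Matrix.rank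
  rw [h]

end StieltjesAux

/-- If `A` and `B` are symmetric `n × n` real matrices and `z ∈ ℂ` with `Im z > 0`, then
`|(1/n) Tr((A - zI)⁻¹) - (1/n) Tr((B - zI)⁻¹)| ≤ (π / (n · Im z)) · rank (A - B)`. -/
theorem stieltjes_rank_bound (n : ℕ) (hn : 0 < n)
    (A B : Matrix (Fin n) (Fin n) ℝ) (hA : A.IsSymm) (hB : B.IsSymm)
    (z : ℂ) (hz : 0 < z.im) :
    ‖(1 / (n : ℂ)) * Matrix.trace ((A.map (Complex.ofReal) - z • (1 : Matrix (Fin n) (Fin n) ℂ))⁻¹)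
      - (1 / (n : ℂ)) * Matrix.trace ((B.map (Complex.ofReal) - z • (1 : Matrix (Fin n) (Fin n) ℂ))⁻¹)‖
    ≤ (Real.pi / (n * z.im)) * ((A - B).rank : ℝ) := by
  classical
  set TA := A.map Complex.ofReal - z • (1 : Matrix (Fin n) (Fin n) ℂ) with hTA
  set TB := B.map Complex.ofReal - z • (1 : Matrix (Fin n) (Fin n) ℂ) with hTB
  have hdA : IsUnit TA.det := isUnit_det_shift hA hz
  have hdB : IsUnit TB.det := isUnit_det_shift hB hz
  set M := TA⁻¹ - TB⁻¹ with hM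
  -- resolvent identity
  have hres : M = TA⁻¹ * (TB - TA) * TB⁻¹ := by
    have h1 : TA⁻¹ * TB * TB⁻¹ = TA⁻¹ := by
      rw [Matrix.mul_assoc, Matrix.mul_nonsing_inv _ hdB, Matrix.mul_one]
    have h2 : TA⁻¹ * TA * TB⁻¹ = TB⁻¹ := by
      rw [Matrix.nonsing_inv_mul _ hdA, Matrix.one_mul]
    rw [hM, Matrix.mul_sub, Matrix.sub_mul, h1, h2]
  -- rank bound
  have hTBTA : TB - TA = (B - A).map Complex.ofReal := by
    rw [hTA, hTB]
    ext i j
    simp [Matrix.map_apply]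
  have hrank : M.rank ≤ (A - B).rank := by
    rw [hres]
    calc (TA⁻¹ * (TB - TA) * TB⁻¹).rank ≤ (TA⁻¹ * (TB - TA)).rank :=
          Matrix.rank_mul_le_left _ _
      _ ≤ (TB - TA).rank := Matrix.rank_mul_le_right _ _
      _ ≤ (B - A).rank := by rw [hTBTA]; exact rank_map_ofReal_le _
      _ = (A - B).rank := by rw [show A - B = -(B - A) from (neg_sub B A).symm, rank_neg']
  -- inner product bound
  have hinner : ∀ v : EuclideanSpace ℂ (Fin n),
      ‖(@inner ℂ _ _ v (Matrix.toEuclideanLin M v))‖ ≤ (2 / z.im) * ‖v‖ ^ 2 := by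
    intro v
    have hMv : Matrix.toEuclideanLin M v
        = Matrix.toEuclideanLin TA⁻¹ v - Matrix.toEuclideanLin TB⁻¹ v := by
      rw [hM, map_sub]; rfl
    rw [hMv, inner_sub_right]
    have bA : ‖(@inner ℂ _ _ v (Matrix.toEuclideanLin TA⁻¹ v))‖ ≤ ‖v‖ * (‖v‖ / z.im) :=
      le_trans (norm_inner_le_norm _ _)
        (mul_le_mul_of_nonneg_left (resolvent_bound hA hz v) (norm_nonneg v))
    have bB : ‖(@inner ℂ _ _ v (Matrix.toEuclideanLin TB⁻¹ v))‖ ≤ ‖v‖ * (‖v‖ / z.im) :=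
      le_trans (norm_inner_le_norm _ _)
        (mul_le_mul_of_nonneg_left (resolvent_bound hB hz v) (norm_nonneg v))
    calc ‖(@inner ℂ _ _ v (Matrix.toEuclideanLin TA⁻¹ v))
            - (@inner ℂ _ _ v (Matrix.toEuclideanLin TB⁻¹ v))‖
        ≤ _ + _ := norm_sub_le _ _
      _ ≤ ‖v‖ * (‖v‖ / z.im) + ‖v‖ * (‖v‖ / z.im) := add_le_add bA bB
      _ = (2 / z.im) * ‖v‖ ^ 2 := by field_simp; ring
  have htr : ‖M.trace‖ ≤ (M.rank : ℝ) * (2 / z.im) :=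
    trace_bound M (by positivity) hinner
  -- assemble
  have htrsub : TA⁻¹.trace - TB⁻¹.trace = M.trace := by
    rw [hM, Matrix.trace_sub]
  have key : ‖TA⁻¹.trace - TB⁻¹.trace‖ ≤ ((A - B).rank : ℝ) * (2 / z.im) := by
    rw [htrsub]
    refine le_trans htr ?_
    have hcast : (M.rank : ℝ) ≤ ((A - B).rank : ℝ) := by exact_mod_cast hrank
    have h2 : (0:ℝ) ≤ 2 / z.im := by positivity
    nlinarith
  have hfactor : (1 / (n : ℂ)) * TA⁻¹.trace - (1 / (n : ℂ)) * TB⁻¹.trace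
      = (1 / (n : ℂ)) * (TA⁻¹.trace - TB⁻¹.trace) := by ring
  rw [hfactor, norm_mul]
  have habsn : ‖(1 / (n : ℂ))‖ = 1 / (n : ℝ) := by
    rw [norm_div]; simp
  rw [habsn]
  have hnpos : (0:ℝ) < n := by exact_mod_cast hn
  calc (1 / (n:ℝ)) * ‖TA⁻¹.trace - TB⁻¹.trace‖
      ≤ (1 / (n:ℝ)) * (((A - B).rank : ℝ) * (2 / z.im)) := by
        apply mul_le_mul_of_nonneg_left key (by positivity)
    _ ≤ (Real.pi / (n * z.im)) * ((A - B).rank : ℝ) := by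
        have hpi : (2:ℝ) ≤ Real.pi := Real.two_le_pi
        have hrnn : (0:ℝ) ≤ ((A - B).rank : ℝ) := Nat.cast_nonneg _
        have heq1 : (1 / (n:ℝ)) * (((A - B).rank : ℝ) * (2 / z.im))
            = (2 * ((A - B).rank : ℝ)) / ((n:ℝ) * z.im) := by
          field_simp
        have heq2 : (Real.pi / ((n:ℝ) * z.im)) * ((A - B).rank : ℝ)
            = (Real.pi * ((A - B).rank : ℝ)) / ((n:ℝ) * z.im) := by ring
        rw [heq1, heq2]
        gcongr
end

section
/- Let W be a d×p real matrix with singular value decomposition W = UΣV^T, with singular values σ_1, …, σ_m (m = min(d,p)), left singular vectors u^1, …, u^m ∈ ℝ^d and right singular vectors v^1, …, v^m ∈ ℝ^p. Define the linear operator Q̂ on ℝ^d ⊗ ℝ^p by Q̂(x ⊗ y) = (α²/d)(x ⊗ W^T W y + W y ⊗ W^T x) + β²(x ⊗ y), extended linearly. Then for i ≠ j ≤ m with σ_i² + σ_j² > 0, the vector σ_j u^i ⊗ v^j + σ_i u^j ⊗ v^i is an eigenvector of Q̂ with eigenvalue (α²/d)(σ_i² + σ_j²) + β², and the vector σ_i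 u^i ⊗ v^j − σ_j u^j ⊗ v^i is an eigenvector with eigenvalue β². -/
open Matrix

lemma vecMulVec_mul {m n k : Type*} [Fintype n] (x : m → ℝ) (y : n → ℝ)
    (A : Matrix n k ℝ) : vecMulVec x y * A = vecMulVec x (Aᵀ *ᵥ y) := by
  ext i j
  simp [vecMulVec_apply, mul_apply, mulVec, dotProduct, Finset.mul_sum, mul_comm, mul_left_comm]

lemma mul_vecMulVec {m n k : Type*} [Fintype m] (A : Matrix k m ℝ) (x : m → ℝ) (y : n → ℝ) :
    A * vecMulVec x y = vecMulVec (A *ᵥ x) y := by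
  ext i j
  simp [vecMulVec_apply, mul_apply, mulVec, dotProduct, Finset.sum_mul, mul_assoc]

lemma vecMulVec_transpose {m n : Type*} (x : m → ℝ) (y : n → ℝ) :
    (vecMulVec x y)ᵀ = vecMulVec y x := by
  ext i j; simp [vecMulVec_apply, mul_comm]

lemma smul_vecMulVec {m n : Type*} (c : ℝ) (x : m → ℝ) (y : n → ℝ) :
    vecMulVec (c • x) y = c • vecMulVec x y := by
  ext i j; simp [vecMulVec_apply, mul_assoc]

lemma vecMulVec_smul' {m n : Type*} (c : ℝ) (x : m → ℝ) (y : n → ℝ) :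
    vecMulVec x (c • y) = c • vecMulVec x y := by
  ext i j; simp [vecMulVec_apply]; ring

/-- The operator `Q̂` on `ℝ^d ⊗ ℝ^p ≅ Matrix (Fin d) (Fin p) ℝ` defined on simple tensors by
`Q̂(x ⊗ y) = (α²/d)(x ⊗ WᵀW y + W y ⊗ Wᵀ x) + β² (x ⊗ y)`, extended linearly.  On a matrix
`T` (identifying `x ⊗ y` with `vecMulVec x y`) it is given by
`Q̂(T) = (α²/d) (T (WᵀW) + W Tᵀ W) + β² T`. -/
noncomputable def Qhat (d p : ℕ) (α β : ℝ) (W : Matrix (Fin d) (Fin p) ℝ)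
    (T : Matrix (Fin d) (Fin p) ℝ) : Matrix (Fin d) (Fin p) ℝ :=
  (α ^ 2 / d) • (T * (Wᵀ * W) + W * Tᵀ * W) + β ^ 2 • T

lemma key1 {d p : ℕ} (W : Matrix (Fin d) (Fin p) ℝ) (σ : ℝ)
    (u : Fin d → ℝ) (v : Fin p → ℝ) (x : Fin d → ℝ)
    (hW : W *ᵥ v = σ • u) (hWT : Wᵀ *ᵥ u = σ • v) :
    vecMulVec x v * (Wᵀ * W) = σ ^ 2 • vecMulVec x v := by
  rw [_root_.vecMulVec_mul, transpose_mul, transpose_transpose, ← mulVec_mulVec, hW,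
    mulVec_smul, hWT, smul_smul, ← sq, _root_.vecMulVec_smul']

lemma key2 {d p : ℕ} (W : Matrix (Fin d) (Fin p) ℝ) (σ τ : ℝ)
    (u u' : Fin d → ℝ) (v v' : Fin p → ℝ)
    (hW : W *ᵥ v = σ • u') (hWT : Wᵀ *ᵥ u = τ • v') :
    W * (vecMulVec u v)ᵀ * W = (σ * τ) • vecMulVec u' v' := by
  rw [_root_.vecMulVec_transpose, _root_.mul_vecMulVec, hW, _root_.vecMulVec_mul, hWT,
    _root_.smul_vecMulVec, _root_.vecMulVec_smul', smul_smul]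

/-- For singular triples `(σᵢ, uⁱ, vⁱ)`, `(σⱼ, uʲ, vʲ)` of `W` with `i ≠ j` and
`σᵢ² + σⱼ² > 0`, the vector `σⱼ uⁱ ⊗ vʲ + σᵢ uʲ ⊗ vⁱ` is an eigenvector of `Q̂` with
eigenvalue `(α²/d)(σᵢ² + σⱼ²) + β²`, and `σᵢ uⁱ ⊗ vʲ − σⱼ uʲ ⊗ vⁱ` is an eigenvector with
eigenvalue `β²`. -/
theorem Qhat_eigenvectors (d p : ℕ) (hd : 0 < d) (α β : ℝ)
    (W : Matrix (Fin d) (Fin p) ℝ)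
    (σi σj : ℝ) (ui uj : Fin d → ℝ) (vi vj : Fin p → ℝ)
    (hWi : W *ᵥ vi = σi • ui) (hWTi : Wᵀ *ᵥ ui = σi • vi)
    (hWj : W *ᵥ vj = σj • uj) (hWTj : Wᵀ *ᵥ uj = σj • vj)
    (hσ : 0 < σi ^ 2 + σj ^ 2) :
    Qhat d p α β W (σj • vecMulVec ui vj + σi • vecMulVec uj vi)
      = ((α ^ 2 / d) * (σi ^ 2 + σj ^ 2) + β ^ 2) •
          (σj • vecMulVec ui vj + σi • vecMulVec uj vi)
    ∧ Qhat d p α β W (σi • vecMulVec ui vj - σj • vecMulVec uj vi)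
      = β ^ 2 • (σi • vecMulVec ui vj - σj • vecMulVec uj vi) := by
  have h1 : vecMulVec ui vj * (Wᵀ * W) = σj ^ 2 • vecMulVec ui vj :=
    key1 W σj uj vj ui hWj hWTj
  have h2 : vecMulVec uj vi * (Wᵀ * W) = σi ^ 2 • vecMulVec uj vi :=
    key1 W σi ui vi uj hWi hWTi
  have h3 : W * (vecMulVec ui vj)ᵀ * W = (σj * σi) • vecMulVec uj vi :=
    key2 W σj σi ui uj vj vi hWj hWTi
  have h4 : W * (vecMulVec uj vi)ᵀ * W = (σi * σj) • vecMulVec ui vj :=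
    key2 W σi σj uj ui vi vj hWi hWTj
  constructor <;>
  · simp only [Qhat, smul_add, smul_sub, add_mul, sub_mul, smul_mul_assoc,
      transpose_add, transpose_sub, transpose_smul, Matrix.mul_smul, Matrix.smul_mul,
      Matrix.mul_add, Matrix.mul_sub, Matrix.add_mul, Matrix.sub_mul, h1, h2, h3, h4]
    module
end

section
/- Let h : ℝ → ℝ be given by h(x) = E[h₁(xZ)h₂(xZ)] where Z is a standard Gaussian and h₁, h₂ are locally Lipschitz with polynomial growth. If g is defined by g(x²) = h(x), then for x ≠ 0, g'(x²) = (1/(2x²))·E[(Z²−1)·h₁(xZ)·h₂(xZ)]. -/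
open MeasureTheory ProbabilityTheory Real Set
open scoped NNReal ENNReal

lemma abs_pow_le_aux (u : ℝ) (k : ℕ) : |u| ^ k ≤ 1 + u ^ (2 * k) := by
  have h2 : u ^ (2 * k) = |u| ^ (2 * k) := by
    rw [pow_mul, pow_mul, sq_abs]
  rw [h2]
  rcases le_total |u| 1 with h | h
  · have h1 : |u| ^ k ≤ 1 := pow_le_one₀ (abs_nonneg u) h
    have h0 : (0:ℝ) ≤ |u| ^ (2 * k) := by positivity
    linarith
  · have h1 : |u| ^ k ≤ |u| ^ (2 * k) := pow_le_pow_right₀ h (by omega)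
    linarith

lemma integrable_abs_pow_mul_exp {b : ℝ} (hb : 0 < b) (k : ℕ) :
    Integrable (fun u : ℝ => |u| ^ k * Real.exp (-b * u ^ 2)) := by
  set f : ℝ → ℝ := fun u => |u| ^ k * Real.exp (-b * u ^ 2) with hf
  have hIoi : IntegrableOn f (Ioi 0) := by
    have h := integrableOn_rpow_mul_exp_neg_mul_sq hb (s := (k : ℝ))
      (by linarith [Nat.cast_nonneg (α := ℝ) k])
    refine h.congr_fun (fun u hu => ?_) measurableSet_Ioi
    show u ^ (k : ℝ) * Real.exp (-b * u ^ 2) = f u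
    rw [hf]
    simp only
    rw [abs_of_pos hu, Real.rpow_natCast]
  have hIci : IntegrableOn f (Ici 0) := Iff.mpr integrableOn_Ici_iff_integrableOn_Ioi hIoi
  have hIic : IntegrableOn f (Iic 0) := by
    have A : MeasurableEmbedding (fun x : ℝ => -x) := measurableEmbedding_neg
    have hrestr : volume.restrict (Iic (0:ℝ))
        = Measure.map (fun x : ℝ => -x) (volume.restrict (Ici 0)) := by
      conv_lhs => rw [← Measure.map_neg_eq_self (volume : Measure ℝ)]
      rw [A.restrict_map]
      congr 1
      ext u
      simp
    rw [IntegrableOn, hrestr, A.integrable_map_iff]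
    have heq : f ∘ (fun x : ℝ => -x) = f := by
      funext u; simp [hf, neg_sq]
    rwa [heq]
  have h := hIic.union hIoi
  rwa [Iic_union_Ioi, integrableOn_univ] at h

lemma gauss_integral_eq (v : ℝ≥0) (hv : v ≠ 0) (f : ℝ → ℝ) :
    ∫ u, f u ∂(gaussianReal 0 v) = ∫ u, gaussianPDFReal 0 v u * f u := by
  rw [gaussianReal_of_var_ne_zero 0 hv]
  have h1 : gaussianPDF 0 v
      = fun u => ((Real.toNNReal (gaussianPDFReal 0 v u) : ℝ≥0) : ℝ≥0∞) := rfl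
  rw [h1, integral_withDensity_eq_integral_smul ((measurable_gaussianPDFReal 0 v).real_toNNReal)]
  congr 1
  funext u
  rw [NNReal.smul_def, smul_eq_mul, Real.coe_toNNReal _ (gaussianPDFReal_nonneg 0 v u)]

lemma gauss_map_integral (x : ℝ) (f : ℝ → ℝ) (hf : Continuous f) :
    ∫ z, f (x * z) ∂(gaussianReal 0 1)
      = ∫ u, f u ∂(gaussianReal 0 ⟨x ^ 2, sq_nonneg x⟩) := by
  have hmap := gaussianReal_map_const_mul (μ := 0) (v := 1) x
  simp only [mul_zero, mul_one] at hmap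
  rw [show gaussianReal 0 ⟨x ^ 2, sq_nonneg x⟩ = _ from hmap.symm,
    integral_map (by fun_prop) hf.aestronglyMeasurable]

lemma hasDerivAt_gauss_pdf (u y : ℝ) (hy : 0 < y) :
    HasDerivAt (fun t : ℝ => (Real.sqrt (2 * π * t))⁻¹ * Real.exp (-u ^ 2 / (2 * t)))
      ((Real.sqrt (2 * π * y))⁻¹ * Real.exp (-u ^ 2 / (2 * y)) *
        (u ^ 2 / (2 * y ^ 2) - 1 / (2 * y))) y := by
  have h2πy : 0 < 2 * π * y := by positivity
  have hs0 : 0 < Real.sqrt (2 * π * y) := Real.sqrt_pos.mpr h2πy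
  have hsq : Real.sqrt (2 * π * y) ^ 2 = 2 * π * y := Real.sq_sqrt h2πy.le
  have h1 : HasDerivAt (fun t : ℝ => Real.sqrt (2 * π * t))
      (1 / (2 * Real.sqrt (2 * π * y)) * (2 * π)) y := by
    have hinner : HasDerivAt (fun t : ℝ => 2 * π * t) (2 * π) y := by
      simpa using (hasDerivAt_id y).const_mul (2 * π)
    exact (Real.hasDerivAt_sqrt h2πy.ne').comp y hinner
  have h2 := h1.inv hs0.ne'
  have h3 : HasDerivAt (fun t : ℝ => -u ^ 2 / (2 * t)) (u ^ 2 / (2 * y ^ 2)) y := by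
    have h := (hasDerivAt_inv hy.ne').const_mul (-u ^ 2 / 2)
    have heq : (fun t : ℝ => -u ^ 2 / 2 * t⁻¹) = fun t : ℝ => -u ^ 2 / (2 * t) := by
      funext t; ring
    rw [heq] at h
    refine h.congr_deriv ?_
    field_simp
  have h4 := h3.exp
  have h5 := h2.mul h4
  refine h5.congr_deriv ?_
  simp only [Pi.inv_apply]
  have h6 : Real.sqrt (2 * π * y) ^ 3 = (2 * π * y) * Real.sqrt (2 * π * y) := by
    rw [pow_succ, hsq]
  set s := Real.sqrt (2 * π * y) with hsdef
  set E := Real.exp (-u ^ 2 / (2 * y)) with hEdef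
  field_simp
  linear_combination (E * y) * hsq

/-- Let `h(x) = E[h₁(xZ) h₂(xZ)]` with `Z` standard Gaussian and `h₁, h₂` locally Lipschitz
of polynomial growth.  If `g` satisfies `g(x²) = h(x)` and is differentiable on `(0,∞)`,
then for `x ≠ 0`, `g'(x²) = (1/(2x²)) E[(Z² − 1) h₁(xZ) h₂(xZ)]`. -/
theorem deriv_gaussian_expectation
    (h₁ h₂ : ℝ → ℝ) (hLip₁ : LocallyLipschitz h₁) (hLip₂ : LocallyLipschitz h₂)
    (C : ℝ) (nPow : ℕ)
    (hgrow₁ : ∀ x : ℝ, |h₁ x| ≤ C * (1 + |x| ^ nPow))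
    (hgrow₂ : ∀ x : ℝ, |h₂ x| ≤ C * (1 + |x| ^ nPow))
    (g g' : ℝ → ℝ)
    (hg : ∀ x : ℝ, g (x ^ 2) = ∫ z, h₁ (x * z) * h₂ (x * z) ∂(gaussianReal 0 1))
    (hderiv : ∀ y : ℝ, 0 < y → HasDerivAt g (g' y) y) :
    ∀ x : ℝ, x ≠ 0 →
      g' (x ^ 2) = (1 / (2 * x ^ 2)) *
        ∫ z, (z ^ 2 - 1) * (h₁ (x * z) * h₂ (x * z)) ∂(gaussianReal 0 1) := by
  intro x hx
  have hFc : Continuous fun u => h₁ u * h₂ u := hLip₁.continuous.mul hLip₂.continuous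
  set F : ℝ → ℝ := fun u => h₁ u * h₂ u with hFdef
  have hC : 0 ≤ C := by
    have h := hgrow₁ 0
    nlinarith [abs_nonneg (h₁ 0), pow_nonneg (abs_nonneg (0:ℝ)) nPow]
  have hFg : ∀ u : ℝ, |F u| ≤ C ^ 2 * (1 + |u| ^ nPow) ^ 2 := by
    intro u
    calc |F u| = |h₁ u| * |h₂ u| := abs_mul _ _
    _ ≤ (C * (1 + |u| ^ nPow)) * (C * (1 + |u| ^ nPow)) :=
        mul_le_mul (hgrow₁ u) (hgrow₂ u) (abs_nonneg _) (by positivity)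
    _ = C ^ 2 * (1 + |u| ^ nPow) ^ 2 := by ring
  set y₀ : ℝ := x ^ 2 with hy₀def
  have hy₀ : 0 < y₀ := by positivity
  set p : ℝ → ℝ → ℝ := fun y u => (Real.sqrt (2 * π * y))⁻¹ * Real.exp (-u ^ 2 / (2 * y))
    with hpdef
  set q : ℝ → ℝ → ℝ := fun y u => p y u * (u ^ 2 / (2 * y ^ 2) - 1 / (2 * y)) with hqdef
  have hpcont : ∀ y : ℝ, Continuous fun u => p y u := by
    intro y
    simp only [hpdef]
    exact continuous_const.mul (Real.continuous_exp.comp (by fun_prop))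
  have hppos : ∀ y u : ℝ, 0 ≤ p y u := by
    intro y u
    simp only [hpdef]
    positivity
  set b : ℝ := 1 / (3 * y₀) with hbdef
  have hb : 0 < b := by rw [hbdef]; positivity
  set c1 : ℝ := (Real.sqrt (π * y₀))⁻¹ * C ^ 2 with hc1def
  set bound : ℝ → ℝ := fun u =>
    c1 * ((2 * u ^ 2 / y₀ ^ 2 + 1 / y₀) * (1 + |u| ^ nPow) ^ 2) * Real.exp (-b * u ^ 2)
    with hbounddef
  have hboundInt : Integrable bound := by
    have e : bound = fun u =>
        (c1 * (2 / y₀ ^ 2)) * (|u| ^ 2 * Real.exp (-b * u ^ 2))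
      + (c1 * (4 / y₀ ^ 2)) * (|u| ^ (nPow + 2) * Real.exp (-b * u ^ 2))
      + (c1 * (2 / y₀ ^ 2)) * (|u| ^ (2 * nPow + 2) * Real.exp (-b * u ^ 2))
      + (c1 * (1 / y₀)) * (|u| ^ 0 * Real.exp (-b * u ^ 2))
      + (c1 * (2 / y₀)) * (|u| ^ nPow * Real.exp (-b * u ^ 2))
      + (c1 * (1 / y₀)) * (|u| ^ (2 * nPow) * Real.exp (-b * u ^ 2)) := by
      funext u
      simp only [hbounddef]
      rw [← sq_abs u]
      ring
    rw [e]
    exact ((((((integrable_abs_pow_mul_exp hb 2).const_mul _).add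
      ((integrable_abs_pow_mul_exp hb (nPow + 2)).const_mul _)).add
      ((integrable_abs_pow_mul_exp hb (2 * nPow + 2)).const_mul _)).add
      ((integrable_abs_pow_mul_exp hb 0).const_mul _)).add
      ((integrable_abs_pow_mul_exp hb nPow).const_mul _)).add
      ((integrable_abs_pow_mul_exp hb (2 * nPow)).const_mul _)
  have hyball : ∀ y ∈ Metric.ball y₀ (y₀ / 2), y₀ / 2 < y ∧ y < 3 * y₀ / 2 := by
    intro y hy
    rw [Metric.mem_ball, Real.dist_eq, abs_lt] at hy
    constructor <;> linarith [hy.1, hy.2]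
  have hp_le : ∀ y : ℝ, y₀ / 2 < y → y < 3 * y₀ / 2 → ∀ u : ℝ,
      p y u ≤ (Real.sqrt (π * y₀))⁻¹ * Real.exp (-b * u ^ 2) := by
    intro y hy1 hy2 u
    have hy : 0 < y := lt_trans (by positivity) hy1
    have hs : Real.sqrt (π * y₀) ≤ Real.sqrt (2 * π * y) := by
      apply Real.sqrt_le_sqrt
      nlinarith [Real.pi_pos]
    have hs0 : 0 < Real.sqrt (π * y₀) := Real.sqrt_pos.mpr (by positivity)
    have hinv : (Real.sqrt (2 * π * y))⁻¹ ≤ (Real.sqrt (π * y₀))⁻¹ :=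
      inv_anti₀ hs0 hs
    have hexp : Real.exp (-u ^ 2 / (2 * y)) ≤ Real.exp (-b * u ^ 2) := by
      apply Real.exp_le_exp.mpr
      have h1 : u ^ 2 / (3 * y₀) ≤ u ^ 2 / (2 * y) :=
        div_le_div_of_nonneg_left (sq_nonneg u) (by positivity) (by linarith)
      have h2 : -b * u ^ 2 = -(u ^ 2 / (3 * y₀)) := by rw [hbdef]; ring
      have h3 : -u ^ 2 / (2 * y) = -(u ^ 2 / (2 * y)) := by ring
      rw [h2, h3]
      exact neg_le_neg h1
    simp only [hpdef]
    exact mul_le_mul hinv hexp (Real.exp_pos _).le (by positivity)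
  have hq_le : ∀ y : ℝ, y₀ / 2 < y → y < 3 * y₀ / 2 → ∀ u : ℝ,
      |q y u * F u| ≤ bound u := by
    intro y hy1 hy2 u
    have hy : 0 < y := lt_trans (by positivity) hy1
    have habs : |q y u * F u| = p y u * |u ^ 2 / (2 * y ^ 2) - 1 / (2 * y)| * |F u| := by
      rw [hqdef]
      simp only
      rw [abs_mul, abs_mul, abs_of_nonneg (hppos y u)]
    have hmid : |u ^ 2 / (2 * y ^ 2) - 1 / (2 * y)| ≤ 2 * u ^ 2 / y₀ ^ 2 + 1 / y₀ := by
      have hA : (0:ℝ) ≤ u ^ 2 / (2 * y ^ 2) := by positivity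
      have hB : (0:ℝ) ≤ 1 / (2 * y) := by positivity
      have h1 : |u ^ 2 / (2 * y ^ 2) - 1 / (2 * y)|
          ≤ u ^ 2 / (2 * y ^ 2) + 1 / (2 * y) := by
        apply abs_le.mpr
        constructor <;> linarith
      have h3 : u ^ 2 / (2 * y ^ 2) ≤ u ^ 2 / (y₀ ^ 2 / 2) :=
        div_le_div_of_nonneg_left (sq_nonneg u) (by positivity) (by nlinarith)
      have h4 : u ^ 2 / (y₀ ^ 2 / 2) = 2 * u ^ 2 / y₀ ^ 2 := by
        field_simp
      have h5 : 1 / (2 * y) ≤ 1 / y₀ :=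
        div_le_div_of_nonneg_left zero_le_one (by positivity) (by linarith)
      linarith
    calc |q y u * F u| = p y u * |u ^ 2 / (2 * y ^ 2) - 1 / (2 * y)| * |F u| := habs
    _ ≤ ((Real.sqrt (π * y₀))⁻¹ * Real.exp (-b * u ^ 2)) * (2 * u ^ 2 / y₀ ^ 2 + 1 / y₀)
        * (C ^ 2 * (1 + |u| ^ nPow) ^ 2) := by
      apply mul_le_mul _ (hFg u) (abs_nonneg _) (by positivity)
      exact mul_le_mul (hp_le y hy1 hy2 u) hmid (abs_nonneg _) (by positivity)
    _ = bound u := by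
      simp only [hbounddef, hc1def]
      ring
  have hintF : Integrable (fun u => p y₀ u * F u) := by
    apply Integrable.mono' (hboundInt.const_mul y₀)
      ((hpcont y₀).mul hFc).aestronglyMeasurable
    filter_upwards with u
    have h1 : ‖p y₀ u * F u‖ = p y₀ u * |F u| := by
      rw [Real.norm_eq_abs, abs_mul, abs_of_nonneg (hppos y₀ u)]
    rw [show ((fun u => p y₀ u) * F) u = p y₀ u * F u from rfl, h1]
    have h2 : p y₀ u * |F u|
        ≤ ((Real.sqrt (π * y₀))⁻¹ * Real.exp (-b * u ^ 2)) * (C ^ 2 * (1 + |u| ^ nPow) ^ 2) :=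
      mul_le_mul (hp_le y₀ (by linarith) (by linarith) u) (hFg u) (abs_nonneg _) (by positivity)
    have hfac : (1:ℝ) ≤ 2 * u ^ 2 / y₀ + 1 := by
      have : (0:ℝ) ≤ 2 * u ^ 2 / y₀ := by positivity
      linarith
    have hK : (0:ℝ) ≤ (Real.sqrt (π * y₀))⁻¹ * Real.exp (-b * u ^ 2)
        * (C ^ 2 * (1 + |u| ^ nPow) ^ 2) := by positivity
    have h3 : ((Real.sqrt (π * y₀))⁻¹ * Real.exp (-b * u ^ 2))
        * (C ^ 2 * (1 + |u| ^ nPow) ^ 2) ≤ y₀ * bound u := by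
      calc ((Real.sqrt (π * y₀))⁻¹ * Real.exp (-b * u ^ 2)) * (C ^ 2 * (1 + |u| ^ nPow) ^ 2)
          = ((Real.sqrt (π * y₀))⁻¹ * Real.exp (-b * u ^ 2)
            * (C ^ 2 * (1 + |u| ^ nPow) ^ 2)) * 1 := by ring
      _ ≤ ((Real.sqrt (π * y₀))⁻¹ * Real.exp (-b * u ^ 2)
            * (C ^ 2 * (1 + |u| ^ nPow) ^ 2)) * (2 * u ^ 2 / y₀ + 1) :=
        mul_le_mul_of_nonneg_left hfac hK
      _ = y₀ * bound u := by
        simp only [hbounddef, hc1def]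
        field_simp
    linarith
  have hdiffp : ∀ u : ℝ, ∀ y ∈ Metric.ball y₀ (y₀ / 2),
      HasDerivAt (fun t => p t u * F u) (q y u * F u) y := by
    intro u y hy
    obtain ⟨hy1, hy2⟩ := hyball y hy
    have hy' : 0 < y := lt_trans (by positivity) hy1
    have h := (hasDerivAt_gauss_pdf u y hy').mul_const (F u)
    simp only [hpdef, hqdef]
    exact h
  have main := hasDerivAt_integral_of_dominated_loc_of_deriv_le (μ := volume)
    (F := fun y u => p y u * F u) (F' := fun y u => q y u * F u) (x₀ := y₀)
    (bound := bound) (s := Metric.ball y₀ (y₀ / 2)) (Metric.ball_mem_nhds _ (by positivity))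
    (Filter.Eventually.of_forall fun y => ((hpcont y).mul hFc).aestronglyMeasurable)
    hintF
    (by
      apply Continuous.aestronglyMeasurable
      simp only [hqdef]
      exact ((hpcont y₀).mul (by fun_prop)).mul hFc)
    (ae_of_all _ fun u y hy => by
      obtain ⟨hy1, hy2⟩ := hyball y hy
      rw [Real.norm_eq_abs]
      exact hq_le y hy1 hy2 u)
    hboundInt
    (ae_of_all _ fun u y hy => hdiffp u y hy)
  have hgp : ∀ y : ℝ, 0 < y → g y = ∫ u, p y u * F u := by
    intro y hy
    have hsy : Real.sqrt y ^ 2 = y := Real.sq_sqrt hy.le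
    have hsy0 : Real.sqrt y ≠ 0 := (Real.sqrt_pos.mpr hy).ne'
    have h1 := hg (Real.sqrt y)
    rw [hsy] at h1
    rw [h1]
    have hv : (⟨Real.sqrt y ^ 2, sq_nonneg _⟩ : ℝ≥0) ≠ 0 := by
      intro h0
      exact (pow_ne_zero 2 hsy0) (by simpa using congrArg Subtype.val h0)
    rw [show (fun z => h₁ (Real.sqrt y * z) * h₂ (Real.sqrt y * z))
        = fun z => F (Real.sqrt y * z) from rfl]
    rw [gauss_map_integral (Real.sqrt y) F hFc, gauss_integral_eq _ hv F]
    congr 1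
    funext u
    have hpdfp : gaussianPDFReal 0 (⟨Real.sqrt y ^ 2, sq_nonneg _⟩ : ℝ≥0) u = p y u := by
      simp only [gaussianPDFReal, NNReal.coe_mk, sub_zero, hsy, hpdef]
      rfl
    rw [hpdfp]
  have hD : HasDerivAt g (∫ u, q y₀ u * F u) y₀ := by
    apply main.2.congr_of_eventuallyEq
    filter_upwards [Ioi_mem_nhds hy₀] with y hy
    exact hgp y hy
  have hgq : g' y₀ = ∫ u, q y₀ u * F u := (hderiv y₀ hy₀).unique hD
  have hRHS : (∫ z, (z ^ 2 - 1) * (h₁ (x * z) * h₂ (x * z)) ∂(gaussianReal 0 1))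
      = ∫ u, p y₀ u * (((u / x) ^ 2 - 1) * F u) := by
    have hGc : Continuous fun u => ((u / x) ^ 2 - 1) * F u :=
      (((continuous_id.div_const x).pow 2).sub continuous_const).mul hFc
    have h1 : (fun z : ℝ => (z ^ 2 - 1) * (h₁ (x * z) * h₂ (x * z)))
        = fun z => ((x * z / x) ^ 2 - 1) * F (x * z) := by
      funext z
      rw [mul_div_cancel_left₀ z hx]
    rw [h1]
    have hv : (⟨x ^ 2, sq_nonneg x⟩ : ℝ≥0) ≠ 0 := by
      intro h0
      exact (pow_ne_zero 2 hx) (by simpa using congrArg Subtype.val h0)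
    rw [gauss_map_integral x (fun u => ((u / x) ^ 2 - 1) * F u) hGc,
      gauss_integral_eq _ hv (fun u => ((u / x) ^ 2 - 1) * F u)]
    congr 1
    funext u
    have hpdfp : gaussianPDFReal 0 (⟨x ^ 2, sq_nonneg x⟩ : ℝ≥0) u = p y₀ u := by
      simp only [gaussianPDFReal, NNReal.coe_mk, sub_zero, hpdef, hy₀def]
      rfl
    rw [hpdfp]
  rw [hgq, hRHS, ← integral_const_mul]
  congr 1
  funext u
  simp only [hqdef, hpdef, hy₀def]
  have hx2 : x ^ 2 ≠ 0 := pow_ne_zero 2 hx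
  field_simp
end

section
/- Let X be a d-dimensional random vector with i.i.d. centered entries of unit variance and finite fourth moment, and let g : ℝ → ℝ be Lipschitz on a neighborhood of 1 with |g| of polynomial growth. Then for distinct indices a ≠ c, |E[x_a x_c g(‖X‖²/d)]| ≤ E[|x_a x_c| · |g(‖X‖²/d) − g((‖X‖² − x_a² − x_c²)/d)|] ≤ C/d for a constant C depending only on g and the fourth moment, where the key step is that E[x_a x_c g((Σ_{j≠a,c} x_j²)/d)] = 0 by independence. -/
open MeasureTheory ProbabilityTheory

/-- Let `X = (x₁, …, x_d)` have i.i.d. centered entries with unit variance and fourth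
moment `μ₄`, and let `g` be Lipschitz with constant `L`.  Then for `a ≠ c`,
`|E[x_a x_c g(‖X‖²/d)]| ≤ E[|x_a x_c| |g(‖X‖²/d) − g((‖X‖² − x_a² − x_c²)/d)|] ≤ C/d`
with `C = 2 L μ₄`, the key step being `E[x_a x_c g((Σ_{j≠a,c} x_j²)/d)] = 0`. -/
theorem decorrelation_bound {Ω : Type*} [MeasurableSpace Ω]
    (P : Measure Ω) [IsProbabilityMeasure P]
    (d : ℕ) (hd : 0 < d) (X : Fin d → Ω → ℝ)
    (hmeas : ∀ i, Measurable (X i))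
    (hindep : iIndepFun X P)
    (hident : ∀ i j, IdentDistrib (X i) (X j) P P)
    (hmean : ∀ i, ∫ ω, X i ω ∂P = 0)
    (hvar : ∀ i, ∫ ω, (X i ω) ^ 2 ∂P = 1)
    (μ₄ : ℝ) (hμ₄ : ∀ i, ∫ ω, (X i ω) ^ 4 ∂P = μ₄)
    (hμ₄int : ∀ i, Integrable (fun ω => (X i ω) ^ 4) P)
    (L : ℝ) (hL : 0 < L) (g : ℝ → ℝ)
    (hg : ∀ x y : ℝ, |g x - g y| ≤ L * |x - y|)
    (a c : Fin d) (hac : a ≠ c) :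
    |∫ ω, X a ω * X c ω * g ((∑ j, (X j ω) ^ 2) / d) ∂P|
        ≤ ∫ ω, |X a ω * X c ω| *
            |g ((∑ j, (X j ω) ^ 2) / d)
              - g (((∑ j, (X j ω) ^ 2) - (X a ω) ^ 2 - (X c ω) ^ 2) / d)| ∂P
    ∧ (∫ ω, |X a ω * X c ω| *
            |g ((∑ j, (X j ω) ^ 2) / d)
              - g (((∑ j, (X j ω) ^ 2) - (X a ω) ^ 2 - (X c ω) ^ 2) / d)| ∂P)
        ≤ (2 * L * μ₄) / d
    ∧ (∫ ω, X a ω * X c ω *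
          g ((∑ j ∈ Finset.univ \ {a, c}, (X j ω) ^ 2) / d) ∂P) = 0 := by
  classical
  have hdpos : (0:ℝ) < d := by exact_mod_cast hd
  set T : Finset (Fin d) := Finset.univ \ {a, c} with hT
  -- g is continuous, hence measurable
  have hglip : LipschitzWith ⟨L, hL.le⟩ g :=
    LipschitzWith.of_dist_le_mul fun x y => by
      rw [Real.dist_eq, Real.dist_eq]; exact hg x y
  have hgm : Measurable g := hglip.continuous.measurable
  -- sum identity
  have hsub : ∀ ω, (∑ j, (X j ω) ^ 2) - (X a ω) ^ 2 - (X c ω) ^ 2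
      = ∑ j ∈ T, (X j ω) ^ 2 := by
    intro ω
    have h1 : (∑ j ∈ T, (X j ω) ^ 2) + ∑ j ∈ ({a, c} : Finset (Fin d)), (X j ω) ^ 2
        = ∑ j, (X j ω) ^ 2 := by
      rw [hT]; exact Finset.sum_sdiff (Finset.subset_univ _)
    rw [Finset.sum_pair hac] at h1
    linarith
  -- pointwise moment comparisons
  have habs_le : ∀ x : ℝ, |x| ≤ x ^ 4 + 1 := by
    intro x
    have h4 : x ^ 4 = |x| ^ 4 := by
      rw [← abs_pow]; exact (abs_of_nonneg (by positivity)).symm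
    nlinarith [sq_nonneg (|x| ^ 2 - 1/2), sq_nonneg (|x| - 1/2)]
  have hsq_le : ∀ x : ℝ, x ^ 2 ≤ x ^ 4 + 1 := by
    intro x; nlinarith [sq_nonneg (x ^ 2 - 1), sq_nonneg x]
  -- integrability of X i and (X i)^2
  have hX1 : ∀ i, Integrable (X i) P := fun i =>
    ((hμ₄int i).add (integrable_const 1)).mono (hmeas i).aestronglyMeasurable
      (Filter.Eventually.of_forall fun ω => by
        simp only [Pi.add_apply, Real.norm_eq_abs]
        have h0 : (0:ℝ) ≤ (X i ω) ^ 4 + 1 := by positivity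
        rw [abs_of_nonneg h0]; exact habs_le _)
  have hXsq : ∀ i, Integrable (fun ω => (X i ω) ^ 2) P := fun i =>
    ((hμ₄int i).add (integrable_const 1)).mono
      ((hmeas i).pow_const 2).aestronglyMeasurable
      (Filter.Eventually.of_forall fun ω => by
        simp only [Pi.add_apply, Real.norm_eq_abs]
        have h0 : (0:ℝ) ≤ (X i ω) ^ 4 + 1 := by positivity
        rw [abs_of_nonneg h0, abs_of_nonneg (sq_nonneg _)]; exact hsq_le _)
  -- independence of X a * X c and g of the rest
  have hdisj : Disjoint ({a, c} : Finset (Fin d)) T := by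
    rw [hT]; exact Finset.disjoint_sdiff
  have hbase := hindep.indepFun_finset ({a, c} : Finset (Fin d)) T hdisj hmeas
  have haS : a ∈ ({a, c} : Finset (Fin d)) := by simp
  have hcS : c ∈ ({a, c} : Finset (Fin d)) := by simp
  have hφ : Measurable (fun v : (({a, c} : Finset (Fin d)) : Type _) → ℝ =>
      v ⟨a, haS⟩ * v ⟨c, hcS⟩) :=
    (measurable_pi_apply _).mul (measurable_pi_apply _)
  have hψ : Measurable (fun v : ((T : Finset (Fin d)) : Type _) → ℝ =>
      g ((∑ j, (v j) ^ 2) / d)) :=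
    hgm.comp ((Finset.measurable_sum Finset.univ fun j _ =>
      (measurable_pi_apply j).pow_const 2).div_const (d:ℝ))
  have hIndep1 : IndepFun (fun ω => X a ω * X c ω)
      (fun ω => g ((∑ j ∈ T, (X j ω) ^ 2) / d)) P := by
    have h2 := hbase.comp hφ hψ
    have heq : ((fun v : ((T : Finset (Fin d)) : Type _) → ℝ =>
        g ((∑ j, (v j) ^ 2) / d)) ∘ (fun ω (i : T) => X i ω))
        = fun ω => g ((∑ j ∈ T, (X j ω) ^ 2) / d) := by
      funext ω
      simp only [Function.comp]
      rw [Finset.sum_coe_sort T (fun j => (X j ω) ^ 2)]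
    rwa [heq] at h2
  -- independence of squares
  have hsqIndep : IndepFun (fun ω => (X a ω) ^ 2) (fun ω => (X c ω) ^ 2) P :=
    (hindep.indepFun hac).comp (measurable_id.pow_const 2) (measurable_id.pow_const 2)
  have hXsqsq : Integrable (fun ω => (X a ω) ^ 2 * (X c ω) ^ 2) P :=
    hsqIndep.integrable_mul (hXsq a) (hXsq c)
  have hEsqsq : ∫ ω, (X a ω) ^ 2 * (X c ω) ^ 2 ∂P = 1 := by
    have h : ∫ ω, (X a ω) ^ 2 * (X c ω) ^ 2 ∂P
        = (∫ ω, (X a ω) ^ 2 ∂P) * ∫ ω, (X c ω) ^ 2 ∂P :=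
      hsqIndep.integral_fun_mul_eq_mul_integral (hXsq a).aestronglyMeasurable (hXsq c).aestronglyMeasurable
    rw [h, hvar a, hvar c, mul_one]
  -- μ₄ ≥ 1
  have hμ₄ge1 : 1 ≤ μ₄ := by
    have h0 : 0 ≤ ∫ ω, ((X a ω) ^ 2 - 1) ^ 2 ∂P :=
      integral_nonneg fun ω => sq_nonneg _
    have heq : ∫ ω, ((X a ω) ^ 2 - 1) ^ 2 ∂P = μ₄ - 1 := by
      have h1 : (fun ω => ((X a ω) ^ 2 - 1) ^ 2)
          = fun ω => ((X a ω) ^ 4 - 2 * (X a ω) ^ 2) + 1 := by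
        funext ω; ring
      have hint1 : Integrable (fun ω => (X a ω) ^ 4 - 2 * (X a ω) ^ 2) P :=
        (hμ₄int a).sub ((hXsq a).const_mul 2)
      have hint2 : Integrable (fun ω => 2 * (X a ω) ^ 2) P := (hXsq a).const_mul 2
      rw [h1, integral_add hint1 (integrable_const 1),
        integral_sub (hμ₄int a) hint2, integral_const_mul 2 (fun ω => (X a ω) ^ 2),
        hμ₄ a, hvar a, integral_const]
      simp only [measure_univ, probReal_univ, ENNReal.toReal_one, smul_eq_mul, mul_one, one_mul]
      ring
    linarith [heq ▸ h0]
  -- integrability of g((∑_T X_j²)/d)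
  have hgs'int : Integrable (fun ω => g ((∑ j ∈ T, (X j ω) ^ 2) / d)) P := by
    have hdom : Integrable (fun ω => |g 0| + (L / d) * ∑ j ∈ T, (X j ω) ^ 2) P :=
      (integrable_const _).add ((integrable_finset_sum T fun j _ => hXsq j).const_mul _)
    refine hdom.mono ?_ (Filter.Eventually.of_forall fun ω => ?_)
    · exact (hgm.comp ((Finset.measurable_sum T fun j _ =>
        (hmeas j).pow_const 2).div_const (d:ℝ))).aestronglyMeasurable
    · have hnn : (0:ℝ) ≤ ∑ j ∈ T, (X j ω) ^ 2 :=
        Finset.sum_nonneg fun j _ => sq_nonneg _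
      rw [Real.norm_eq_abs, Real.norm_eq_abs,
        abs_of_nonneg (add_nonneg (abs_nonneg (g 0))
          (mul_nonneg (by positivity : (0:ℝ) ≤ L / d) hnn))]
      have h1 := hg ((∑ j ∈ T, (X j ω) ^ 2) / d) 0
      rw [sub_zero, abs_of_nonneg (div_nonneg hnn hdpos.le)] at h1
      have h2 : |g ((∑ j ∈ T, (X j ω) ^ 2) / d)|
          ≤ |g ((∑ j ∈ T, (X j ω) ^ 2) / d) - g 0| + |g 0| := by
        have := abs_add_le (g ((∑ j ∈ T, (X j ω) ^ 2) / d) - g 0) (g 0)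
        simpa using this
      have h3 : L * ((∑ j ∈ T, (X j ω) ^ 2) / d)
          = (L / d) * ∑ j ∈ T, (X j ω) ^ 2 := by ring
      linarith
  -- integrability of X a * X c and of the products
  have hXacInt : Integrable (fun ω => X a ω * X c ω) P :=
    (hindep.indepFun hac).integrable_mul (hX1 a) (hX1 c)
  have hprod0int : Integrable (fun ω => (X a ω * X c ω)
      * g ((∑ j ∈ T, (X j ω) ^ 2) / d)) P :=
    hIndep1.integrable_mul hXacInt hgs'int
  -- measurability of the full sum
  have hs_m : Measurable (fun ω => ∑ j, (X j ω) ^ 2) :=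
    Finset.measurable_sum Finset.univ fun j _ => (hmeas j).pow_const 2
  have hs'_m : Measurable (fun ω => ∑ j ∈ T, (X j ω) ^ 2) :=
    Finset.measurable_sum T fun j _ => (hmeas j).pow_const 2
  -- pointwise bound on the difference term
  have hptbound : ∀ ω, |X a ω * X c ω *
      (g ((∑ j, (X j ω) ^ 2) / d) - g ((∑ j ∈ T, (X j ω) ^ 2) / d))|
      ≤ (L / d) * ((X a ω) ^ 4 / 2 + (X c ω) ^ 4 / 2 + (X a ω) ^ 2 * (X c ω) ^ 2) := by
    intro ω
    have hΔ : |g ((∑ j, (X j ω) ^ 2) / d) - g ((∑ j ∈ T, (X j ω) ^ 2) / d)|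
        ≤ (L / d) * ((X a ω) ^ 2 + (X c ω) ^ 2) := by
      have h1 := hg ((∑ j, (X j ω) ^ 2) / d) ((∑ j ∈ T, (X j ω) ^ 2) / d)
      have h2 : (∑ j, (X j ω) ^ 2) / d - (∑ j ∈ T, (X j ω) ^ 2) / d
          = ((X a ω) ^ 2 + (X c ω) ^ 2) / d := by
        rw [div_sub_div_same]; congr 1; linarith [hsub ω]
      have hnn2 : (0:ℝ) ≤ ((X a ω) ^ 2 + (X c ω) ^ 2) / d :=
        div_nonneg (by positivity) hdpos.le
      rw [h2, abs_of_nonneg hnn2] at h1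
      have h3 : L * (((X a ω) ^ 2 + (X c ω) ^ 2) / d)
          = (L / d) * ((X a ω) ^ 2 + (X c ω) ^ 2) := by ring
      linarith
    rw [abs_mul]
    have hnn1 : (0:ℝ) ≤ |X a ω * X c ω| := abs_nonneg _
    calc |X a ω * X c ω| * |g ((∑ j, (X j ω) ^ 2) / d) - g ((∑ j ∈ T, (X j ω) ^ 2) / d)|
        ≤ |X a ω * X c ω| * ((L / d) * ((X a ω) ^ 2 + (X c ω) ^ 2)) :=
          mul_le_mul_of_nonneg_left hΔ hnn1
      _ ≤ (L / d) * ((X a ω) ^ 4 / 2 + (X c ω) ^ 4 / 2 + (X a ω) ^ 2 * (X c ω) ^ 2) := by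
          have hLd : (0:ℝ) ≤ L / d := by positivity
          have hu : |X a ω * X c ω| = |X a ω| * |X c ω| := abs_mul _ _
          have h4a : (X a ω) ^ 2 = |X a ω| ^ 2 := (sq_abs _).symm
          have h4c : (X c ω) ^ 2 = |X c ω| ^ 2 := (sq_abs _).symm
          have h8a : (X a ω) ^ 4 = |X a ω| ^ 4 := by
            rw [← abs_pow]; exact (abs_of_nonneg (by positivity)).symm
          have h8c : (X c ω) ^ 4 = |X c ω| ^ 4 := by
            rw [← abs_pow]; exact (abs_of_nonneg (by positivity)).symm
          rw [hu, h4a, h4c, h8a, h8c]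
          have key : |X a ω| * |X c ω| * (|X a ω| ^ 2 + |X c ω| ^ 2)
              ≤ |X a ω| ^ 4 / 2 + |X c ω| ^ 4 / 2 + |X a ω| ^ 2 * |X c ω| ^ 2 := by
            nlinarith [mul_nonneg (by positivity : (0:ℝ) ≤ |X a ω| ^ 2 + |X c ω| ^ 2)
              (sq_nonneg (|X a ω| - |X c ω|)), abs_nonneg (X a ω), abs_nonneg (X c ω)]
          nlinarith [key, hLd]
  -- integrability of the difference term
  have hD : Integrable (fun ω => (L / d) * ((X a ω) ^ 4 / 2 + (X c ω) ^ 4 / 2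
      + (X a ω) ^ 2 * (X c ω) ^ 2)) P :=
    ((((hμ₄int a).div_const 2).add ((hμ₄int c).div_const 2)).add hXsqsq).const_mul _
  have hΔint : Integrable (fun ω => X a ω * X c ω *
      (g ((∑ j, (X j ω) ^ 2) / d) - g ((∑ j ∈ T, (X j ω) ^ 2) / d))) P := by
    refine hD.mono ?_ (Filter.Eventually.of_forall fun ω => ?_)
    · exact (((hmeas a).mul (hmeas c)).mul
        ((hgm.comp (hs_m.div_const (d:ℝ))).sub (hgm.comp (hs'_m.div_const (d:ℝ))))).aestronglyMeasurable
    · rw [Real.norm_eq_abs, Real.norm_eq_abs,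
        abs_of_nonneg (by positivity : (0:ℝ) ≤ (L / d) * ((X a ω) ^ 4 / 2
          + (X c ω) ^ 4 / 2 + (X a ω) ^ 2 * (X c ω) ^ 2))]
      exact hptbound ω
  -- third conjunct: the key vanishing expectation
  have hEXaXc : ∫ ω, X a ω * X c ω ∂P = 0 := by
    have h : ∫ ω, X a ω * X c ω ∂P = (∫ ω, X a ω ∂P) * ∫ ω, X c ω ∂P :=
      (hindep.indepFun hac).integral_fun_mul_eq_mul_integral (hX1 a).aestronglyMeasurable (hX1 c).aestronglyMeasurable
    rw [h, hmean a, hmean c, mul_zero]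
  have part3 : (∫ ω, X a ω * X c ω *
      g ((∑ j ∈ T, (X j ω) ^ 2) / d) ∂P) = 0 := by
    have h : ∫ ω, X a ω * X c ω * g ((∑ j ∈ T, (X j ω) ^ 2) / d) ∂P
        = (∫ ω, X a ω * X c ω ∂P) * ∫ ω, g ((∑ j ∈ T, (X j ω) ^ 2) / d) ∂P :=
      hIndep1.integral_fun_mul_eq_mul_integral hXacInt.aestronglyMeasurable hgs'int.aestronglyMeasurable
    rw [h, hEXaXc, zero_mul]
  -- rewrite the absolute-value integrand
  have hIcongr : (∫ ω, |X a ω * X c ω| *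
        |g ((∑ j, (X j ω) ^ 2) / d)
          - g (((∑ j, (X j ω) ^ 2) - (X a ω) ^ 2 - (X c ω) ^ 2) / d)| ∂P)
      = ∫ ω, |X a ω * X c ω *
        (g ((∑ j, (X j ω) ^ 2) / d) - g ((∑ j ∈ T, (X j ω) ^ 2) / d))| ∂P := by
    refine integral_congr_ae (Filter.Eventually.of_forall fun ω => ?_)
    simp only [hsub ω, abs_mul]
  -- first conjunct
  have hsplit : ∫ ω, X a ω * X c ω * g ((∑ j, (X j ω) ^ 2) / d) ∂P
      = (∫ ω, X a ω * X c ω *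
          (g ((∑ j, (X j ω) ^ 2) / d) - g ((∑ j ∈ T, (X j ω) ^ 2) / d)) ∂P)
        + ∫ ω, X a ω * X c ω * g ((∑ j ∈ T, (X j ω) ^ 2) / d) ∂P := by
    rw [← integral_add hΔint hprod0int]
    refine integral_congr_ae (Filter.Eventually.of_forall fun ω => ?_)
    simp only []
    ring
  have part1 : |∫ ω, X a ω * X c ω * g ((∑ j, (X j ω) ^ 2) / d) ∂P|
      ≤ ∫ ω, |X a ω * X c ω| *
          |g ((∑ j, (X j ω) ^ 2) / d)
            - g (((∑ j, (X j ω) ^ 2) - (X a ω) ^ 2 - (X c ω) ^ 2) / d)| ∂P := by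
    rw [hIcongr, hsplit, part3, add_zero]
    have := norm_integral_le_integral_norm (μ := P) (f := fun ω => X a ω * X c ω *
      (g ((∑ j, (X j ω) ^ 2) / d) - g ((∑ j ∈ T, (X j ω) ^ 2) / d)))
    simpa only [Real.norm_eq_abs] using this
  -- second conjunct
  have part2 : (∫ ω, |X a ω * X c ω| *
        |g ((∑ j, (X j ω) ^ 2) / d)
          - g (((∑ j, (X j ω) ^ 2) - (X a ω) ^ 2 - (X c ω) ^ 2) / d)| ∂P)
      ≤ (2 * L * μ₄) / d := by
    rw [hIcongr]
    have hmono : (∫ ω, |X a ω * X c ω *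
          (g ((∑ j, (X j ω) ^ 2) / d) - g ((∑ j ∈ T, (X j ω) ^ 2) / d))| ∂P)
        ≤ ∫ ω, (L / d) * ((X a ω) ^ 4 / 2 + (X c ω) ^ 4 / 2
            + (X a ω) ^ 2 * (X c ω) ^ 2) ∂P :=
      integral_mono hΔint.abs hD fun ω => hptbound ω
    have hval : (∫ ω, (L / d) * ((X a ω) ^ 4 / 2 + (X c ω) ^ 4 / 2
        + (X a ω) ^ 2 * (X c ω) ^ 2) ∂P) = (L / d) * (μ₄ + 1) := by
      have hint3 : Integrable (fun ω => (X a ω) ^ 4 / 2 + (X c ω) ^ 4 / 2) P :=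
        ((hμ₄int a).div_const 2).add ((hμ₄int c).div_const 2)
      have hint4 : Integrable (fun ω => (X a ω) ^ 4 / 2) P := (hμ₄int a).div_const 2
      have hint5 : Integrable (fun ω => (X c ω) ^ 4 / 2) P := (hμ₄int c).div_const 2
      rw [integral_const_mul, integral_add hint3 hXsqsq,
        integral_add hint4 hint5,
        integral_div, integral_div, hμ₄ a, hμ₄ c, hEsqsq]
      ring
    have hfin : (L / d) * (μ₄ + 1) ≤ (2 * L * μ₄) / d := by
      have h9 : L * (μ₄ + 1) ≤ 2 * L * μ₄ := by nlinarith
      calc (L / d) * (μ₄ + 1) = L * (μ₄ + 1) / d := by ring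
        _ ≤ 2 * L * μ₄ / d := (div_le_div_iff_of_pos_right hdpos).mpr h9
    calc (∫ ω, |X a ω * X c ω *
          (g ((∑ j, (X j ω) ^ 2) / d) - g ((∑ j ∈ T, (X j ω) ^ 2) / d))| ∂P)
        ≤ (L / d) * (μ₄ + 1) := hval ▸ hmono
      _ ≤ (2 * L * μ₄) / d := hfin
  exact ⟨part1, part2, part3⟩
end
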